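/- arXiv:2207.10159 — 2 statements merged into one kernel-verified Lean document; each statement's English description precedes it below -/
import Mathlib

section
/- Let S = {S_1, ..., S_m} be a self-similar zipper in ℝ^n with vertices z_0, ..., z_m and signature ε, and let T = {T_1, ..., T_m} be a linear zipper on [0,1] with vertices t_0, ..., t_m and the same signature ε. Then there exists a unique continuous map g : [0,1] → ℝ^n such that g(t_i) = z_i for all i and S_i ∘ g = g ∘ T_i on [0,1] for every i ∈ {1, ..., m}. -/
open Set Metric

/-- `S i`, for `i < m`, is a contracting similarity with ratio `r i ∈ (0,1)`. -/
def IsSimilaritySystem {X : Type*} [MetricSpace X] (m : ℕ)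
    (S : ℕ → X → X) (r : ℕ → ℝ) : Prop :=
  ∀ i < m, 0 < r i ∧ r i < 1 ∧ ∀ x y, dist (S i x) (S i y) = r i * dist x y

/-- Self-similar zipper with maps `S 0, …, S (m-1)`, ratios `r`, vertices `z 0, …, z m`,
signature `ε` (values in `{0,1}`).  Here `S i` plays the role of the map `S_{i+1}` of the
paper, so the zipper conditions read `S i (z 0) = z (i + ε i)` and
`S i (z m) = z (i + 1 - ε i)`. -/
def IsZipper {X : Type*} [MetricSpace X] (m : ℕ)
    (S : ℕ → X → X) (r : ℕ → ℝ) (z : ℕ → X) (ε : ℕ → ℕ) : Prop :=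
  1 ≤ m ∧ IsSimilaritySystem m S r ∧ (∀ i < m, ε i ≤ 1) ∧
    ∀ i < m, S i (z 0) = z (i + ε i) ∧ S i (z m) = z (i + 1 - ε i)

/-- Linear zipper on `[0,1]`, with vertices `0 = t 0 < t 1 < … < t m = 1`. -/
def IsLinearZipper (m : ℕ) (T : ℕ → ℝ → ℝ) (r : ℕ → ℝ) (t : ℕ → ℝ) (ε : ℕ → ℕ) : Prop :=
  IsZipper m T r t ε ∧ t 0 = 0 ∧ t m = 1 ∧ ∀ i < m, t i < t (i + 1)

/-- `K` is the attractor of the iterated function system `{S i : i < m}`. -/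
def IsAttractor {X : Type*} [MetricSpace X] (m : ℕ) (S : ℕ → X → X) (K : Set X) : Prop :=
  K.Nonempty ∧ IsCompact K ∧ K = ⋃ i ∈ Finset.range m, S i '' K

/-- `g` is a structural parametrization of the zipper `S` (with vertices `z`)
relative to the linear zipper `T` (with vertices `t`). -/
def IsStructuralParam {X : Type*} [MetricSpace X] (m : ℕ) (S : ℕ → X → X)
    (T : ℕ → ℝ → ℝ) (t : ℕ → ℝ) (z : ℕ → X) (g : ℝ → X) : Prop :=
  ContinuousOn g (Icc 0 1) ∧ (∀ i ≤ m, g (t i) = z i) ∧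
    ∀ i < m, ∀ x ∈ Icc (0:ℝ) 1, S i (g x) = g (T i x)

/-- A Jordan zipper: a zipper whose attractor `γ` is a Jordan arc, i.e. some structural
parametrization is injective on `[0,1]` (hence a homeomorphism onto `γ`). -/
def IsJordanZipper {X : Type*} [MetricSpace X] (m : ℕ) (S : ℕ → X → X) (r : ℕ → ℝ)
    (z : ℕ → X) (ε : ℕ → ℕ) (γ : Set X) : Prop :=
  IsZipper m S r z ε ∧ IsAttractor m S γ ∧
    ∃ T rT t g, IsLinearZipper m T rT t ε ∧ IsStructuralParam m S T t z g ∧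
      InjOn g (Icc 0 1) ∧ g '' Icc 0 1 = γ

/-- `g` is an injective continuous parametrization of the arc `γ` by `[0,1]`. -/
def IsArcParam {X : Type*} [MetricSpace X] (γ : Set X) (g : ℝ → X) : Prop :=
  ContinuousOn g (Icc 0 1) ∧ InjOn g (Icc 0 1) ∧ g '' Icc 0 1 = γ

/-- Bounded turning with constant `M`: every subarc `γ_{xy}` (expressed via any
parametrization of the arc) has diameter at most `M‖x - y‖`. -/
def BoundedTurning {X : Type*} [MetricSpace X] (γ : Set X) (M : ℝ) : Prop :=
  0 < M ∧ ∀ g : ℝ → X, IsArcParam γ g →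
    ∀ s ∈ Icc (0:ℝ) 1, ∀ u ∈ Icc (0:ℝ) 1, diam (g '' uIcc s u) ≤ M * dist (g s) (g u)

/-- `f` agrees with the systems `S` and `S'` on `γ`: `f ∘ S i = S' i ∘ f` on `γ`. -/
def Agrees {X Y : Type*} [MetricSpace X] [MetricSpace Y] (m : ℕ)
    (S : ℕ → X → X) (S' : ℕ → Y → Y) (γ : Set X) (f : X → Y) : Prop :=
  ∀ i < m, ∀ x ∈ γ, f (S i x) = S' i (f x)

/-- `f` restricts to a homeomorphism of the compact set `γ` onto `γ'`. -/
def IsHomeoOnto {X Y : Type*} [MetricSpace X] [MetricSpace Y]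
    (γ : Set X) (γ' : Set Y) (f : X → Y) : Prop :=
  ContinuousOn f γ ∧ InjOn f γ ∧ f '' γ = γ'

/-- Composition `S_{i₁} ∘ … ∘ S_{i_k}` along a multi-index (a list). -/
def compS {X : Type*} (S : ℕ → X → X) : List ℕ → X → X
  | [] => id
  | i :: l => S i ∘ compS S l

/-- Product of the ratios along a multi-index. -/
def ratioProd (p : ℕ → ℝ) (l : List ℕ) : ℝ := (l.map p).prod

lemma real_sim_affine {T : ℝ → ℝ} {r : ℝ} (hr : 0 < r)
    (h : ∀ x y, dist (T x) (T y) = r * dist x y) (x : ℝ) :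
    T x = T 0 + (T 1 - T 0) * x := by
  have e1 := h x 0
  have e2 := h x 1
  have e3 := h 1 0
  simp only [Real.dist_eq] at e1 e2 e3
  have q1 : (T x - T 0)^2 = r^2 * x^2 := by
    have : |T x - T 0| ^ 2 = (r * |x - 0|)^2 := by rw [e1]
    simpa [sq_abs, mul_pow] using this
  have q2 : (T x - T 1)^2 = r^2 * (x-1)^2 := by
    have : |T x - T 1| ^ 2 = (r * |x - 1|)^2 := by rw [e2]
    simpa [sq_abs, mul_pow] using this
  have q3 : (T 1 - T 0)^2 = r^2 := by
    have : |T 1 - T 0| ^ 2 = (r * |1 - 0|)^2 := by rw [e3]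
    simpa [sq_abs, mul_pow] using this
  have hne : T 1 - T 0 ≠ 0 := by
    intro h0; rw [h0] at q3; nlinarith
  have key : (T 1 - T 0) * (T x - T 0 - (T 1 - T 0) * x) = 0 := by
    linear_combination (q1 - q2 - (2*x-1)*q3)/2
  rcases mul_eq_zero.mp key with h' | h'
  · exact absurd h' hne
  · linarith

/-- index of the subinterval of the linear zipper containing `x`. -/
noncomputable def zipIdx (m : ℕ) (t : ℕ → ℝ) (x : ℝ) : ℕ :=
  Nat.findGreatest (fun k => t k ≤ x) (m - 1)

/-- inverse of the affine map `T i`. -/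
noncomputable def zipInv (T : ℕ → ℝ → ℝ) (i : ℕ) (x : ℝ) : ℝ :=
  (x - T i 0) / (T i 1 - T i 0)

/-- the zipper operator on functions. -/
noncomputable def zipPhi {X : Type*} (m : ℕ) (S : ℕ → X → X) (T : ℕ → ℝ → ℝ)
    (t : ℕ → ℝ) (h : ℝ → X) (x : ℝ) : X :=
  S (zipIdx m t x) (h (zipInv T (zipIdx m t x) x))

theorem zip_main {X : Type*} [NormedAddCommGroup X] [NormedSpace ℝ X] [CompleteSpace X]
    (m : ℕ) (S : ℕ → X → X) (r : ℕ → ℝ) (z : ℕ → X) (ε : ℕ → ℕ)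
    (T : ℕ → ℝ → ℝ) (rT : ℕ → ℝ) (t : ℕ → ℝ)
    (hS : IsZipper m S r z ε) (hT : IsLinearZipper m T rT t ε) :
    ∃ g : ℝ → X, IsStructuralParam m S T t z g ∧
      ∀ g', IsStructuralParam m S T t z g' → EqOn g g' (Icc 0 1) := by
  obtain ⟨hm, hSim, hεle, hSz⟩ := hS
  obtain ⟨⟨-, hTsim, hTεle, hTz⟩, ht0, htm, htlt⟩ := hT
  -- monotonicity of vertices
  have tmono : ∀ j, j ≤ m → ∀ i, i ≤ j → t i ≤ t j := by
    intro j
    induction j with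
    | zero => intro _ i hi; interval_cases i; exact le_rfl
    | succ k ih =>
      intro hk i hi
      rcases Nat.lt_or_ge i (k+1) with h' | h'
      · exact le_trans (ih (by omega) i (by omega)) (htlt k (by omega)).le
      · have hik : i = k + 1 := by omega
        rw [hik]
  have tstrict : ∀ i j, i < j → j ≤ m → t i < t j := fun i j hij hj =>
    lt_of_lt_of_le (htlt i (by omega)) (tmono j hj (i+1) hij)
  -- affine structure of the linear maps
  have Taff : ∀ i < m, ∀ x, T i x = T i 0 + (T i 1 - T i 0) * x := fun i hi =>
    real_sim_affine (hTsim i hi).1 (hTsim i hi).2.2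
  have TE : ∀ i < m, T i 0 = t (i + ε i) ∧ T i 1 = t (i + 1 - ε i) := by
    intro i hi
    obtain ⟨h1, h2⟩ := hTz i hi
    rw [ht0] at h1; rw [htm] at h2
    exact ⟨h1, h2⟩
  have Tends : ∀ i < m, (T i 0 = t i ∧ T i 1 = t (i+1)) ∨ (T i 0 = t (i+1) ∧ T i 1 = t i) := by
    intro i hi
    obtain ⟨h1, h2⟩ := TE i hi
    rcases Nat.le_one_iff_eq_zero_or_eq_one.mp (hTεle i hi) with hε | hε <;>
      rw [hε] at h1 h2
    · left; exact ⟨by simpa using h1, by simpa using h2⟩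
    · right; exact ⟨by simpa using h1, by simpa using h2⟩
  have dne : ∀ i < m, T i 1 - T i 0 ≠ 0 := by
    intro i hi
    have hlt := tstrict i (i+1) (by omega) (by omega)
    rcases Tends i hi with ⟨h1, h2⟩ | ⟨h1, h2⟩ <;> rw [h1, h2] <;> intro hc <;> linarith
  have TU : ∀ i < m, ∀ x, T i (zipInv T i x) = x := by
    intro i hi x
    have hd := dne i hi
    rw [Taff i hi]
    unfold zipInv
    field_simp
    ring
  have UT : ∀ i < m, ∀ y, zipInv T i (T i y) = y := by
    intro i hi y
    unfold zipInv
    have hd := dne i hi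
    rw [Taff i hi y]
    field_simp
    ring
  have Umem : ∀ i < m, ∀ x ∈ Icc (t i) (t (i+1)), zipInv T i x ∈ Icc (0:ℝ) 1 := by
    intro i hi x hx
    have hlt := tstrict i (i+1) (by omega) (by omega)
    obtain ⟨hx1, hx2⟩ := hx
    unfold zipInv
    rcases Tends i hi with ⟨h1, h2⟩ | ⟨h1, h2⟩ <;> rw [h1, h2]
    · constructor
      · apply div_nonneg <;> linarith
      · rw [div_le_one (by linarith)]; linarith
    · constructor
      · rw [div_nonneg_iff]; right; constructor <;> linarith
      · rw [div_le_one_iff]; right; right; constructor <;> linarith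
  have Tmaps : ∀ i < m, ∀ y ∈ Icc (0:ℝ) 1, T i y ∈ Icc (t i) (t (i+1)) := by
    intro i hi y hy
    obtain ⟨hy1, hy2⟩ := hy
    rw [Taff i hi]
    rcases Tends i hi with ⟨h1, h2⟩ | ⟨h1, h2⟩ <;> rw [h1, h2] <;>
      constructor <;>
        nlinarith [mul_nonneg (sub_nonneg.mpr (htlt i hi).le) hy1,
          mul_nonneg (sub_nonneg.mpr (htlt i hi).le) (sub_nonneg.mpr hy2)]
  -- index specs
  have idx_spec : ∀ x ∈ Icc (0:ℝ) 1, zipIdx m t x < m ∧ t (zipIdx m t x) ≤ x ∧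
      x ≤ t (zipIdx m t x + 1) := by
    intro x hx
    have h0 : t 0 ≤ x := by rw [ht0]; exact hx.1
    have hle : zipIdx m t x ≤ m - 1 := Nat.findGreatest_le _
    have hlt : zipIdx m t x < m := by omega
    have hspec : t (zipIdx m t x) ≤ x := by
      have h' := Nat.findGreatest_spec (P := fun k => t k ≤ x) (Nat.zero_le (m-1)) h0
      exact h'
    refine ⟨hlt, hspec, ?_⟩
    by_cases hcase : zipIdx m t x + 1 ≤ m - 1
    · have hng := Nat.findGreatest_is_greatest (P := fun k => t k ≤ x)
        (k := zipIdx m t x + 1) (by unfold zipIdx; exact Nat.lt_succ_self _) hcase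
      exact (not_le.mp hng).le
    · have hEq : zipIdx m t x + 1 = m := by omega
      rw [hEq, htm]; exact hx.2
  -- endpoint values
  have Bval : ∀ h : ℝ → X, h 0 = z 0 → h 1 = z m → ∀ i < m,
      S i (h (zipInv T i (t i))) = z i ∧ S i (h (zipInv T i (t (i+1)))) = z (i+1) := by
    intro h h0 h1 i hi
    obtain ⟨hz1, hz2⟩ := hSz i hi
    obtain ⟨e0, e1⟩ := TE i hi
    rcases Nat.le_one_iff_eq_zero_or_eq_one.mp (hεle i hi) with hε | hε <;>
      rw [hε] at hz1 hz2 e0 e1 <;> simp only [Nat.add_zero, Nat.sub_zero, Nat.add_sub_cancel] at hz1 hz2 e0 e1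
    · constructor
      · rw [← e0, UT i hi 0, h0, hz1]
      · rw [← e1, UT i hi 1, h1, hz2]
    · constructor
      · rw [← e1, UT i hi 1, h1, hz2]
      · rw [← e0, UT i hi 0, h0, hz1]
  -- well-definedness
  have WD : ∀ h : ℝ → X, h 0 = z 0 → h 1 = z m → ∀ i < m, ∀ x ∈ Icc (t i) (t (i+1)),
      zipPhi m S T t h x = S i (h (zipInv T i x)) := by
    intro h h0 h1 i hi x hx
    have hx01 : x ∈ Icc (0:ℝ) 1 :=
      ⟨by rw [← ht0]; exact le_trans (tmono i (by omega) 0 (Nat.zero_le _)) hx.1,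
       by rw [← htm]; exact le_trans hx.2 (tmono m le_rfl (i+1) (by omega))⟩
    obtain ⟨hjm, hj1, hj2⟩ := idx_spec x hx01
    unfold zipPhi
    set j := zipIdx m t x with hjdef
    rcases lt_trichotomy i j with hij | hij | hij
    · have h2' : t (i+1) ≤ t j := tmono _ (by omega) (i+1) (by omega)
      have hj : j = i + 1 := by
        by_contra hne
        exact absurd (tstrict (i+1) j (by omega) (by omega))
          (not_lt.mpr (le_trans hj1 hx.2))
      have hxe : x = t (i+1) := le_antisymm hx.2 (le_trans h2' hj1)
      rw [hj, hxe]
      rw [(Bval h h0 h1 (i+1) (hj ▸ hjm)).1, (Bval h h0 h1 i hi).2]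
    · rw [hij]
    · have h2' : t (j + 1) ≤ t i := tmono _ (by omega) _ (by omega)
      have hj : i = j + 1 := by
        by_contra hne
        exact absurd (tstrict (j + 1) i (by omega) (by omega))
          (not_lt.mpr (le_trans hx.1 hj2))
      have hxe : x = t (j + 1) := le_antisymm hj2 (hj ▸ hx.1)
      rw [hj, hxe]
      rw [(Bval h h0 h1 j hjm).2, (Bval h h0 h1 (j + 1) (hj ▸ hi)).1]
  -- continuity of the maps
  have SCont : ∀ i < m, Continuous (S i) := by
    intro i hi
    have : LipschitzWith (Real.toNNReal (r i)) (S i) := by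
      apply LipschitzWith.of_dist_le_mul
      intro x y
      rw [Real.coe_toNNReal _ (hSim i hi).1.le]
      exact le_of_eq ((hSim i hi).2.2 x y)
    exact this.continuous
  have UCont : ∀ i, Continuous (zipInv T i) := fun i =>
    (continuous_id.sub continuous_const).div_const _
  have PhiCont : ∀ h : ℝ → X, Continuous h → h 0 = z 0 → h 1 = z m →
      ContinuousOn (zipPhi m S T t h) (Icc 0 1) := by
    intro h hc h0 h1
    have piece : ∀ i < m, ContinuousOn (zipPhi m S T t h) (Icc (t i) (t (i+1))) := by
      intro i hi
      apply ContinuousOn.congr (f := fun x => S i (h (zipInv T i x)))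
        (((SCont i hi).comp (hc.comp (UCont i))).continuousOn)
      intro x hx
      exact WD h h0 h1 i hi x hx
    have main : ∀ k, k ≤ m → ContinuousOn (zipPhi m S T t h) (Icc (t 0) (t k)) := by
      intro k
      induction k with
      | zero => intro _; rw [Icc_self]; exact continuousOn_singleton _ _
      | succ k ih =>
        intro hk
        have hIcc : Icc (t 0) (t (k+1)) = Icc (t 0) (t k) ∪ Icc (t k) (t (k+1)) :=
          (Icc_union_Icc_eq_Icc (tmono k (by omega) 0 (Nat.zero_le _)) (htlt k (by omega)).le).symm
        rw [hIcc]
        intro x hx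
        have cA : ContinuousWithinAt (zipPhi m S T t h) (Icc (t 0) (t k)) x := by
          by_cases hxA : x ∈ Icc (t 0) (t k)
          · exact ih (by omega) x hxA
          · exact continuousWithinAt_of_notMem_closure (by rwa [isClosed_Icc.closure_eq])
        have cB : ContinuousWithinAt (zipPhi m S T t h) (Icc (t k) (t (k+1))) x := by
          by_cases hxB : x ∈ Icc (t k) (t (k+1))
          · exact piece k (by omega) x hxB
          · exact continuousWithinAt_of_notMem_closure (by rwa [isClosed_Icc.closure_eq])
        exact cA.union cB
    have := main m le_rfl
    rwa [ht0, htm] at this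
  -- values of Phi at the endpoints
  have PhiVal0 : ∀ h : ℝ → X, h 0 = z 0 → h 1 = z m → zipPhi m S T t h 0 = z 0 := by
    intro h h0 h1
    obtain ⟨hjm, hj1, hj2⟩ := idx_spec 0 ⟨le_rfl, zero_le_one⟩
    have hj0 : zipIdx m t 0 = 0 := by
      by_contra hne
      have := tstrict 0 (zipIdx m t 0) (by omega) (by omega)
      rw [ht0] at this
      linarith
    unfold zipPhi
    rw [hj0]
    rw [show (0:ℝ) = t 0 from ht0.symm]
    exact (Bval h h0 h1 0 (by omega)).1
  have PhiVal1 : ∀ h : ℝ → X, h 0 = z 0 → h 1 = z m → zipPhi m S T t h 1 = z m := by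
    intro h h0 h1
    obtain ⟨hjm, hj1, hj2⟩ := idx_spec 1 ⟨zero_le_one, le_rfl⟩
    have hjm' : zipIdx m t 1 + 1 = m := by
      by_contra hne
      have := tstrict (zipIdx m t 1 + 1) m (by omega) le_rfl
      rw [htm] at this
      linarith
    unfold zipPhi
    set j := zipIdx m t 1 with hjdf
    rw [show (1:ℝ) = t (j + 1) from by rw [hjm', htm]]
    rw [(Bval h h0 h1 j hjm).2, hjm']
  -- the complete metric space of candidate maps
  have h01 : (0:ℝ) ≤ 1 := zero_le_one
  set I01 := Icc (0:ℝ) 1 with hI01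
  let p0 : I01 := ⟨0, left_mem_Icc.mpr h01⟩
  let p1 : I01 := ⟨1, right_mem_Icc.mpr h01⟩
  let sCl : Set C(I01, X) := {f | f p0 = z 0 ∧ f p1 = z m}
  have hclosed : IsClosed sCl :=
    (isClosed_eq (continuous_eval_const p0) continuous_const).inter
      (isClosed_eq (continuous_eval_const p1) continuous_const)
  haveI : CompleteSpace sCl := hclosed.completeSpace_coe
  haveI : Nonempty sCl := by
    refine ⟨⟨⟨fun p => (1 - (p:ℝ)) • z 0 + (p:ℝ) • z m, by fun_prop⟩, ?_, ?_⟩⟩ <;>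
      simp [p0, p1]
  let ext : sCl → ℝ → X := fun f x => (f : C(I01, X)) (projIcc 0 1 h01 x)
  have extCont : ∀ f, Continuous (ext f) := fun f =>
    (f : C(I01, X)).continuous.comp continuous_projIcc
  have extMem : ∀ f : sCl, ∀ x, ∀ hx : x ∈ I01, ext f x = (f : C(I01, X)) ⟨x, hx⟩ := by
    intro f x hx
    show (f : C(I01, X)) _ = _
    rw [projIcc_of_mem h01 hx]
  have ext0 : ∀ f : sCl, ext f 0 = z 0 := by
    intro f
    show (f : C(I01, X)) _ = _
    rw [projIcc_left]
    exact f.2.1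
  have ext1 : ∀ f : sCl, ext f 1 = z m := by
    intro f
    show (f : C(I01, X)) _ = _
    rw [projIcc_right]
    exact f.2.2
  let Phi : sCl → sCl := fun f =>
    ⟨⟨I01.restrict (zipPhi m S T t (ext f)),
      (PhiCont (ext f) (extCont f) (ext0 f) (ext1 f)).restrict⟩,
      PhiVal0 (ext f) (ext0 f) (ext1 f), PhiVal1 (ext f) (ext0 f) (ext1 f)⟩
  -- contraction
  have hmne : (Finset.range m).Nonempty := Finset.nonempty_range_iff.mpr (by omega)
  set c := (Finset.range m).sup' hmne r with hc
  have hrc : ∀ i < m, r i ≤ c := fun i hi => Finset.le_sup' r (Finset.mem_range.mpr hi)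
  have hc0 : 0 < c := lt_of_lt_of_le (hSim 0 (by omega)).1 (hrc 0 (by omega))
  have hc1 : c < 1 := (Finset.sup'_lt_iff hmne).mpr
    fun i hi => (hSim i (Finset.mem_range.mp hi)).2.1
  have hcontr : ContractingWith ⟨c, hc0.le⟩ Phi := by
    constructor
    · exact_mod_cast hc1
    · apply LipschitzWith.of_dist_le_mul
      intro f g
      show dist (Phi f) (Phi g) ≤ c * dist f g
      rw [Subtype.dist_eq, Subtype.dist_eq]
      have hcd : (0:ℝ) ≤ c * dist (f : C(I01, X)) (g : C(I01, X)) :=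
        mul_nonneg hc0.le dist_nonneg
      rw [ContinuousMap.dist_le hcd]
      intro p
      obtain ⟨hjm, hj1, hj2⟩ := idx_spec (p:ℝ) p.2
      show dist (zipPhi m S T t (ext f) (p:ℝ)) (zipPhi m S T t (ext g) (p:ℝ)) ≤ _
      unfold zipPhi
      rw [(hSim _ hjm).2.2]
      have hu : zipInv T (zipIdx m t (p:ℝ)) (p:ℝ) ∈ I01 := Umem _ hjm _ ⟨hj1, hj2⟩
      have hd : dist (ext f (zipInv T (zipIdx m t (p:ℝ)) (p:ℝ)))
          (ext g (zipInv T (zipIdx m t (p:ℝ)) (p:ℝ))) ≤ dist (f : C(I01, X)) (g : C(I01, X)) := by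
        rw [extMem f _ hu, extMem g _ hu]
        exact ContinuousMap.dist_apply_le_dist _
      exact mul_le_mul (hrc _ hjm) hd dist_nonneg hc0.le
  set G := ContractingWith.fixedPoint Phi hcontr with hG
  have hfix : Phi G = G := hcontr.fixedPoint_isFixedPt
  set g : ℝ → X := ext G with hgdef
  have gfix : ∀ x, ∀ hx : x ∈ I01, zipPhi m S T t g x = g x := by
    intro x hx
    have h1 : (Phi G : C(I01, X)) ⟨x, hx⟩ = (G : C(I01, X)) ⟨x, hx⟩ := by rw [hfix]
    calc zipPhi m S T t g x = (Phi G : C(I01, X)) ⟨x, hx⟩ := rfl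
      _ = (G : C(I01, X)) ⟨x, hx⟩ := h1
      _ = g x := (extMem G x hx).symm
  have g0 : g 0 = z 0 := ext0 G
  have g1 : g 1 = z m := ext1 G
  have tmem : ∀ i, i ≤ m → t i ∈ I01 := fun i hi =>
    ⟨by rw [← ht0]; exact tmono i hi 0 (Nat.zero_le _),
     by rw [← htm]; exact tmono m le_rfl i hi⟩
  have gvert : ∀ i ≤ m, g (t i) = z i := by
    intro i hi
    rcases Nat.lt_or_ge i m with h | h
    · rw [← gfix (t i) (tmem i hi), WD g g0 g1 i h (t i) ⟨le_rfl, (htlt i h).le⟩]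
      exact (Bval g g0 g1 i h).1
    · have him : i = m := le_antisymm hi h
      rw [him]
      have hk : m - 1 < m := by omega
      have hmm : m - 1 + 1 = m := by omega
      have hmem : t m ∈ Icc (t (m-1)) (t (m-1+1)) := by
        rw [hmm]
        exact ⟨tmono m le_rfl (m-1) (by omega), le_rfl⟩
      rw [← gfix (t m) (tmem m le_rfl), WD g g0 g1 (m-1) hk (t m) hmem]
      have := (Bval g g0 g1 (m-1) hk).2
      rwa [hmm] at this
  have gstr : ∀ i < m, ∀ x ∈ Icc (0:ℝ) 1, S i (g x) = g (T i x) := by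
    intro i hi x hx
    have hTmem : T i x ∈ Icc (t i) (t (i+1)) := Tmaps i hi x hx
    have hTx01 : T i x ∈ I01 :=
      ⟨le_trans (tmem i (by omega)).1 hTmem.1, le_trans hTmem.2 (tmem (i+1) (by omega)).2⟩
    rw [← gfix (T i x) hTx01, WD g g0 g1 i hi (T i x) hTmem, UT i hi x]
  refine ⟨g, ⟨(extCont G).continuousOn, gvert, gstr⟩, ?_⟩
  intro g' hg'
  obtain ⟨hc', hv', hs'⟩ := hg'
  let f' : sCl := ⟨⟨I01.restrict g', hc'.restrict⟩,
    by show g' 0 = z 0; rw [← ht0]; exact hv' 0 (Nat.zero_le _),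
    by show g' 1 = z m; rw [← htm]; exact hv' m le_rfl⟩
  have e0 : ext f' 0 = z 0 := ext0 f'
  have e1 : ext f' 1 = z m := ext1 f'
  have hfix' : Phi f' = f' := by
    apply Subtype.ext
    apply ContinuousMap.ext
    intro p
    obtain ⟨hjm, hj1, hj2⟩ := idx_spec (p:ℝ) p.2
    show zipPhi m S T t (ext f') (p:ℝ) = g' (p:ℝ)
    rw [WD (ext f') e0 e1 (zipIdx m t (p:ℝ)) hjm (p:ℝ) ⟨hj1, hj2⟩]
    have hu : zipInv T (zipIdx m t (p:ℝ)) (p:ℝ) ∈ I01 := Umem _ hjm _ ⟨hj1, hj2⟩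
    rw [extMem f' _ hu]
    show S _ (g' _) = g' (p:ℝ)
    rw [hs' _ hjm _ hu, TU _ hjm]
  have hGf : f' = G := hcontr.fixedPoint_unique hfix'
  intro x hx
  calc g x = (G : C(I01, X)) ⟨x, hx⟩ := extMem G x hx
    _ = (f' : C(I01, X)) ⟨x, hx⟩ := by rw [hGf]
    _ = g' x := rfl

/-- existence and uniqueness of the structural parametrization. -/
theorem structural_param_exists_unique {n : ℕ} (m : ℕ)
    (S : ℕ → EuclideanSpace ℝ (Fin n) → EuclideanSpace ℝ (Fin n)) (r : ℕ → ℝ)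
    (z : ℕ → EuclideanSpace ℝ (Fin n)) (ε : ℕ → ℕ)
    (T : ℕ → ℝ → ℝ) (rT : ℕ → ℝ) (t : ℕ → ℝ)
    (hS : IsZipper m S r z ε) (hT : IsLinearZipper m T rT t ε) :
    ∃ g : ℝ → EuclideanSpace ℝ (Fin n), IsStructuralParam m S T t z g ∧
      ∀ g', IsStructuralParam m S T t z g' → EqOn g g' (Icc 0 1) :=
  zip_main m S r z ε T rT t hS hT
end

section
/- Let S be a self-similar zipper in ℝ^n with signature ε, T a linear zipper on [0,1] with the same signature, and g : [0,1] → ℝ^n the unique continuous map with g(t_i) = z_i and S_i ∘ g = g ∘ T_i for all i. Then g is Hölder continuous: there exist constants C > 0 and α ∈ (0,1] such that ‖g(s) − g(t)‖ ≤ C|s − t|^α for all s, t ∈ [0,1], and the image g([0,1]) equals the attractor K(S) of the system S. -/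
open Set Metric

lemma compS_cons {X : Type*} (S : ℕ → X → X) (i : ℕ) (l : List ℕ) (x : X) :
    compS S (i :: l) x = S i (compS S l x) := rfl

lemma compS_append {X : Type*} (S : ℕ → X → X) (l1 l2 : List ℕ) (x : X) :
    compS S (l1 ++ l2) x = compS S l1 (compS S l2 x) := by
  induction l1 with
  | nil => rfl
  | cons i l ih => simp [compS_cons, ih, List.cons_append]

lemma ratioProd_cons (p : ℕ → ℝ) (i : ℕ) (l : List ℕ) :
    ratioProd p (i :: l) = p i * ratioProd p l := by simp [ratioProd]

lemma affine_of_sim (T : ℝ → ℝ) (c : ℝ) (hc : 0 < c)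
    (h : ∀ x y, dist (T x) (T y) = c * dist x y) (x : ℝ) :
    T x = T 0 + (T 1 - T 0) * x := by
  have h1 := h x 0
  have h2 := h x 1
  have h3 := h 1 0
  simp only [Real.dist_eq] at h1 h2 h3
  have q1 : (T x - T 0)^2 = c^2 * x^2 := by
    rw [← sq_abs (T x - T 0), h1, mul_pow, sq_abs]; ring_nf
  have q2 : (T x - T 1)^2 = c^2 * (x - 1)^2 := by
    rw [← sq_abs (T x - T 1), h2, mul_pow, sq_abs]
  have q3 : (T 1 - T 0)^2 = c^2 := by
    rw [← sq_abs (T 1 - T 0), h3, mul_pow, sq_abs]; norm_num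
  have hd : T 1 - T 0 ≠ 0 := by
    intro hcon; rw [hcon] at q3; nlinarith
  have key : (T 1 - T 0) * (T x - T 0 - (T 1 - T 0) * x) = 0 := by
    linear_combination (q1 - q2 - (2*x - 1) * q3) / 2
  rcases mul_eq_zero.1 key with h | h
  · exact absurd h hd
  · linarith

set_option maxHeartbeats 1000000 in
/-- the structural parametrization is Hölder continuous and its image
is the attractor of the system. -/
theorem structural_param_holder_and_image {n : ℕ} (m : ℕ)
    (S : ℕ → EuclideanSpace ℝ (Fin n) → EuclideanSpace ℝ (Fin n)) (r : ℕ → ℝ)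
    (z : ℕ → EuclideanSpace ℝ (Fin n)) (ε : ℕ → ℕ)
    (T : ℕ → ℝ → ℝ) (rT : ℕ → ℝ) (t : ℕ → ℝ)
    (hS : IsZipper m S r z ε) (hT : IsLinearZipper m T rT t ε)
    (g : ℝ → EuclideanSpace ℝ (Fin n)) (hg : IsStructuralParam m S T t z g) :
    (∃ C > (0:ℝ), ∃ α ∈ Ioc (0:ℝ) 1, ∀ s ∈ Icc (0:ℝ) 1, ∀ u ∈ Icc (0:ℝ) 1,
        dist (g s) (g u) ≤ C * |s - u| ^ α) ∧
      ∀ K, IsAttractor m S K → g '' Icc 0 1 = K := by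
  obtain ⟨hm, hSsim, hε, hSz⟩ := hS
  obtain ⟨⟨hmT, hTsim, hεT, hTz⟩, ht0, htm, htlt⟩ := hT
  obtain ⟨hgc, hgt, hgS⟩ := hg
  -- monotonicity of t
  have tmono : ∀ i j, i ≤ j → j ≤ m → t i ≤ t j := by
    intro i j hij hjm
    induction j with
    | zero => interval_cases i; exact le_refl _
    | succ k ih =>
      rcases Nat.eq_or_lt_of_le hij with h | h
      · rw [h]
      · exact le_trans (ih (by omega) (by omega)) (le_of_lt (htlt k (by omega)))
  -- endpoints of T i
  have hend : ∀ i < m, (T i 0 = t i ∧ T i 1 = t (i+1)) ∨ (T i 0 = t (i+1) ∧ T i 1 = t i) := by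
    intro i hi
    obtain ⟨h0, h1⟩ := hTz i hi
    rw [ht0] at h0; rw [htm] at h1
    rcases Nat.le_one_iff_eq_zero_or_eq_one.mp (hεT i hi) with h | h <;>
      simp only [h, Nat.add_zero, Nat.add_sub_cancel, Nat.add_sub_cancel_left] at h0 h1
    · exact Or.inl ⟨h0, h1⟩
    · exact Or.inr ⟨h0, h1⟩
  have hrTpos : ∀ i < m, 0 < rT i := fun i hi => (hTsim i hi).1
  have hrTlt : ∀ i < m, rT i < 1 := fun i hi => (hTsim i hi).2.1
  have hTdist : ∀ i < m, ∀ x y, |T i x - T i y| = rT i * |x - y| := by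
    intro i hi x y
    have := (hTsim i hi).2.2 x y
    simpa [Real.dist_eq] using this
  have hrT : ∀ i < m, rT i = t (i+1) - t i := by
    intro i hi
    have h := hTdist i hi 1 0
    have hlt := htlt i hi
    rcases hend i hi with ⟨h0, h1⟩ | ⟨h0, h1⟩ <;> rw [h0, h1] at h
    · rw [abs_of_nonneg (by linarith), abs_of_nonneg (by norm_num : (0:ℝ) ≤ 1 - 0)] at h
      linarith
    · rw [abs_sub_comm, abs_of_nonneg (by linarith),
        abs_of_nonneg (by norm_num : (0:ℝ) ≤ 1 - 0)] at h
      linarith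
  -- δ and ρ
  obtain ⟨δ, hδpos, hδlt, hδle⟩ : ∃ d : ℝ, 0 < d ∧ d < 1 ∧ ∀ i < m, d ≤ rT i := by
    have hrange : (Finset.range m).Nonempty := Finset.nonempty_range_iff.mpr (by omega)
    refine ⟨(Finset.range m).inf' hrange rT, ?_, ?_, ?_⟩
    · rw [Finset.lt_inf'_iff]
      intro i hi; exact hrTpos i (Finset.mem_range.mp hi)
    · exact lt_of_le_of_lt
        (Finset.inf'_le rT (Finset.mem_range.mpr (show 0 < m by omega)))
        (hrTlt 0 (by omega))
    · intro i hi; exact Finset.inf'_le rT (Finset.mem_range.mpr hi)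
  obtain ⟨ρ, hρpos, hρlt, hδρ, hρle⟩ :
      ∃ p : ℝ, 0 < p ∧ p < 1 ∧ δ ≤ p ∧ ∀ i < m, r i ≤ p := by
    have hrange : (Finset.range m).Nonempty := Finset.nonempty_range_iff.mpr (by omega)
    refine ⟨max ((Finset.range m).sup' hrange r) δ,
      lt_of_lt_of_le hδpos (le_max_right _ _), ?_, le_max_right _ _, ?_⟩
    · rw [max_lt_iff]
      constructor
      · rw [Finset.sup'_lt_iff]
        intro i hi; exact (hSsim i (Finset.mem_range.mp hi)).2.1
      · exact hδlt
    · intro i hi; exact le_trans (Finset.le_sup' r (Finset.mem_range.mpr hi)) (le_max_left _ _)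
  -- affine structure of T
  have haff : ∀ i < m, ∀ x, T i x = T i 0 + (T i 1 - T i 0) * x := by
    intro i hi x
    exact affine_of_sim (T i) (rT i) (hrTpos i hi) (hTsim i hi).2.2 x
  -- T i maps [0,1] into [t i, t (i+1)]
  have hTmapI : ∀ i < m, ∀ x ∈ Icc (0:ℝ) 1, T i x ∈ Icc (t i) (t (i+1)) := by
    intro i hi x hx
    obtain ⟨hx0, hx1⟩ := hx
    have hlt := htlt i hi
    rcases hend i hi with ⟨h0, h1⟩ | ⟨h0, h1⟩ <;> rw [haff i hi x, h0, h1] <;>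
      constructor <;> nlinarith
  have hIcc01 : ∀ i < m, Icc (t i) (t (i+1)) ⊆ Icc (0:ℝ) 1 := by
    intro i hi x hx
    obtain ⟨hx0, hx1⟩ := hx
    constructor
    · calc (0:ℝ) = t 0 := ht0.symm
        _ ≤ t i := tmono 0 i (by omega) (by omega)
        _ ≤ x := hx0
    · calc x ≤ t (i+1) := hx1
        _ ≤ t m := tmono (i+1) m (by omega) (by omega)
        _ = 1 := htm
  have hTmap01 : ∀ i < m, ∀ x ∈ Icc (0:ℝ) 1, T i x ∈ Icc (0:ℝ) 1 := by
    intro i hi x hx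
    exact hIcc01 i hi (hTmapI i hi x hx)
  -- surjectivity of T i onto [t i, t (i+1)]
  have hTsurj : ∀ i < m, ∀ s, t i ≤ s → s ≤ t (i+1) → ∃ x ∈ Icc (0:ℝ) 1, T i x = s := by
    intro i hi s hs1 hs2
    have hlt := htlt i hi
    have hrTi := hrT i hi
    rcases hend i hi with ⟨h0, h1⟩ | ⟨h0, h1⟩
    · refine ⟨(s - t i) / rT i, ⟨?_, ?_⟩, ?_⟩
      · apply div_nonneg (by linarith) (le_of_lt (hrTpos i hi))
      · rw [div_le_one (hrTpos i hi)]; linarith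
      · have hne : t (i+1) - t i ≠ 0 := by linarith
        rw [haff i hi, h0, h1, hrTi]
        field_simp
        ring
    · refine ⟨(t (i+1) - s) / rT i, ⟨?_, ?_⟩, ?_⟩
      · apply div_nonneg (by linarith) (le_of_lt (hrTpos i hi))
      · rw [div_le_one (hrTpos i hi)]; linarith
      · have hne : t (i+1) - t i ≠ 0 := by linarith
        rw [haff i hi, h0, h1, hrTi]
        field_simp
        ring
  -- locating a point in some interval
  have hfindaux : ∀ j, j ≤ m → ∀ s, t 0 ≤ s → s ≤ t j → ∃ i < m, t i ≤ s ∧ s ≤ t (i+1) := by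
    intro j
    induction j with
    | zero =>
      intro _ s h0 h1
      exact ⟨0, by omega, h0, le_trans h1 (le_of_lt (htlt 0 (by omega)))⟩
    | succ k ih =>
      intro hk s h0 h1
      by_cases hs : s ≤ t k
      · exact ih (by omega) s h0 hs
      · exact ⟨k, by omega, le_of_not_ge hs, h1⟩
  have hfind : ∀ s ∈ Icc (0:ℝ) 1, ∃ i < m, t i ≤ s ∧ s ≤ t (i+1) := by
    intro s hs
    exact hfindaux m (le_refl m) s (by rw [ht0]; exact hs.1) (by rw [htm]; exact hs.2)
  -- compositions
  have hcompTmem : ∀ l : List ℕ, (∀ j ∈ l, j < m) → ∀ x ∈ Icc (0:ℝ) 1,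
      compS T l x ∈ Icc (0:ℝ) 1 := by
    intro l
    induction l with
    | nil => intro _ x hx; exact hx
    | cons i l ih =>
      intro hl x hx
      rw [compS_cons]
      exact hTmap01 i (hl i (by simp)) _ (ih (fun j hj => hl j (by simp [hj])) x hx)
  have hcompg : ∀ l : List ℕ, (∀ j ∈ l, j < m) → ∀ x ∈ Icc (0:ℝ) 1,
      compS S l (g x) = g (compS T l x) := by
    intro l
    induction l with
    | nil => intro _ x _; rfl
    | cons i l ih =>
      intro hl x hx
      have hl' : ∀ j ∈ l, j < m := fun j hj => hl j (by simp [hj])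
      rw [compS_cons, compS_cons, ih hl' x hx,
        hgS i (hl i (by simp)) _ (hcompTmem l hl' x hx)]
  have hcompSdist : ∀ l : List ℕ, ∀ a b : EuclideanSpace ℝ (Fin n), (∀ j ∈ l, j < m) →
      dist (compS S l a) (compS S l b) = ratioProd r l * dist a b := by
    intro l
    induction l with
    | nil => intro a b _; simp [compS, ratioProd]
    | cons i l ih =>
      intro a b hl
      rw [compS_cons, compS_cons, (hSsim i (hl i (by simp))).2.2,
        ih a b (fun j hj => hl j (by simp [hj])), ratioProd_cons]
      ring
  have hratioS : ∀ l : List ℕ, (∀ j ∈ l, j < m) →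
      0 ≤ ratioProd r l ∧ ratioProd r l ≤ ρ ^ l.length := by
    intro l
    induction l with
    | nil => intro _; simp [ratioProd]
    | cons i l ih =>
      intro hl
      obtain ⟨ih1, ih2⟩ := ih (fun j hj => hl j (by simp [hj]))
      have hri := (hSsim i (hl i (by simp))).1
      rw [ratioProd_cons]
      constructor
      · positivity
      · rw [List.length_cons, pow_succ]
        calc r i * ratioProd r l ≤ ρ * ρ ^ l.length := by
              apply mul_le_mul (hρle i (hl i (by simp))) ih2 ih1 (le_of_lt hρpos)
          _ = ρ ^ l.length * ρ := by ring
  have hratioT : ∀ l : List ℕ, (∀ j ∈ l, j < m) → δ ^ l.length ≤ ratioProd rT l := by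
    intro l
    induction l with
    | nil => intro _; simp [ratioProd]
    | cons i l ih =>
      intro hl
      rw [ratioProd_cons, List.length_cons, pow_succ]
      calc δ ^ l.length * δ = δ * δ ^ l.length := by ring
        _ ≤ rT i * ratioProd rT l := by
            apply mul_le_mul (hδle i (hl i (by simp))) (ih (fun j hj => hl j (by simp [hj])))
              (by positivity) (le_of_lt (hrTpos i (hl i (by simp))))
  -- uniform bound on g
  obtain ⟨Cb, hCb⟩ := isCompact_Icc.exists_bound_of_continuousOn hgc
  have hCb0 : 0 ≤ Cb := le_trans (norm_nonneg _) (hCb 0 (by norm_num))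
  obtain ⟨Mb, hMbpos, hMb⟩ :
      ∃ M : ℝ, 0 < M ∧ ∀ x ∈ Icc (0:ℝ) 1, ∀ y ∈ Icc (0:ℝ) 1, dist (g x) (g y) ≤ M := by
    refine ⟨2 * Cb + 1, by linarith, ?_⟩
    intro x hx y hy
    calc dist (g x) (g y) ≤ ‖g x‖ + ‖g y‖ := dist_le_norm_add_norm _ _
      _ ≤ Cb + Cb := add_le_add (hCb x hx) (hCb y hy)
      _ ≤ 2 * Cb + 1 := by linarith
  have hδpow : ∀ k : ℕ, δ ^ (k+1) ≤ δ := by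
    intro k
    calc δ ^ (k+1) ≤ δ ^ 1 := pow_le_pow_of_le_one (le_of_lt hδpos) (le_of_lt hδlt) (by omega)
      _ = δ := pow_one δ
  have hcancel : ∀ i < m, ∀ a b : ℝ, ∀ k : ℕ, |T i a - T i b| ≤ δ ^ (k+1) → |a - b| ≤ δ ^ k := by
    intro i hi a b k h
    have h1 := hTdist i hi a b
    have h2 : rT i * |a - b| ≤ δ * δ ^ k := by
      rw [← h1]
      calc |T i a - T i b| ≤ δ ^ (k+1) := h
        _ = δ * δ ^ k := by ring
    have h3 : δ * δ ^ k ≤ rT i * δ ^ k :=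
      mul_le_mul_of_nonneg_right (hδle i hi) (by positivity)
    exact le_of_mul_le_mul_left (le_trans h2 h3) (hrTpos i hi)
  -- cells containing a point close to an endpoint 0 or 1
  have hEnd : ∀ k : ℕ, ∀ e : ℝ, (e = 0 ∨ e = 1) → ∀ s ∈ Icc (0:ℝ) 1, |s - e| ≤ δ ^ k →
      ∃ l : List ℕ, l.length = k ∧ (∀ j ∈ l, j < m) ∧
        (∃ x ∈ Icc (0:ℝ) 1, compS T l x = s) ∧ (∃ y ∈ Icc (0:ℝ) 1, compS T l y = e) := by
    intro k
    induction k with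
    | zero =>
      intro e he s hs _
      refine ⟨[], rfl, by simp, ⟨s, hs, rfl⟩, ⟨e, ?_, rfl⟩⟩
      rcases he with h | h <;> simp [h]
    | succ k ih =>
      intro e he s hs hd
      rcases he with he | he
      · -- e = 0, work in interval 0
        subst he
        rw [sub_zero, abs_of_nonneg hs.1] at hd
        have hs1 : s ≤ t 1 := by
          have h2 : δ ≤ rT 0 := hδle 0 (by omega)
          have h3 : rT 0 = t (0+1) - t 0 := hrT 0 (by omega)
          rw [ht0, sub_zero] at h3
          have := hδpow k
          simpa using (by linarith : s ≤ t (0+1))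
        obtain ⟨x, hxI, hTx⟩ := hTsurj 0 (by omega) s (by rw [ht0]; exact hs.1) hs1
        have he' : ∃ e' : ℝ, (e' = 0 ∨ e' = 1) ∧ T 0 e' = 0 := by
          rcases hend 0 (by omega) with ⟨h0, _⟩ | ⟨_, h1⟩
          · exact ⟨0, Or.inl rfl, by rw [h0, ht0]⟩
          · exact ⟨1, Or.inr rfl, by rw [h1, ht0]⟩
        obtain ⟨e', he', hTe'⟩ := he'
        have he'I : e' ∈ Icc (0:ℝ) 1 := by rcases he' with h | h <;> simp [h]
        have hxe : |x - e'| ≤ δ ^ k := by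
          apply hcancel 0 (by omega) x e' k
          rw [hTx, hTe', sub_zero, abs_of_nonneg hs.1]
          exact hd
        obtain ⟨l, hlen, hlm, ⟨x0, hx0I, hx0⟩, ⟨y0, hy0I, hy0⟩⟩ := ih e' he' x hxI hxe
        refine ⟨0 :: l, by simp [hlen], ?_, ⟨x0, hx0I, ?_⟩, ⟨y0, hy0I, ?_⟩⟩
        · intro j hj
          rcases List.mem_cons.mp hj with h | h
          · omega
          · exact hlm j h
        · rw [compS_cons, hx0, hTx]
        · rw [compS_cons, hy0, hTe']
      · -- e = 1, work in the last interval
        subst he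
        rw [abs_sub_comm, abs_of_nonneg (by linarith [hs.2] : (0:ℝ) ≤ 1 - s)] at hd
        obtain ⟨i, hi, hip⟩ : ∃ i, i < m ∧ i + 1 = m := ⟨m - 1, by omega, by omega⟩
        have htip : t (i+1) = 1 := by rw [hip, htm]
        have hs0 : t i ≤ s := by
          have h3 := hrT i hi
          have h2 := hδle i hi
          have := hδpow k
          rw [htip] at h3
          linarith
        obtain ⟨x, hxI, hTx⟩ := hTsurj i hi s hs0 (by rw [htip]; exact hs.2)
        have he' : ∃ e' : ℝ, (e' = 0 ∨ e' = 1) ∧ T i e' = 1 := by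
          rcases hend i hi with ⟨_, h1⟩ | ⟨h0, _⟩
          · exact ⟨1, Or.inr rfl, by rw [h1, htip]⟩
          · exact ⟨0, Or.inl rfl, by rw [h0, htip]⟩
        obtain ⟨e', he', hTe'⟩ := he'
        have he'I : e' ∈ Icc (0:ℝ) 1 := by rcases he' with h | h <;> simp [h]
        have hxe : |x - e'| ≤ δ ^ k := by
          apply hcancel i hi x e' k
          rw [hTx, hTe', abs_sub_comm, abs_of_nonneg (by linarith [hs.2] : (0:ℝ) ≤ 1 - s)]
          exact hd
        obtain ⟨l, hlen, hlm, ⟨x0, hx0I, hx0⟩, ⟨y0, hy0I, hy0⟩⟩ := ih e' he' x hxI hxe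
        refine ⟨i :: l, by simp [hlen], ?_, ⟨x0, hx0I, ?_⟩, ⟨y0, hy0I, ?_⟩⟩
        · intro j hj
          rcases List.mem_cons.mp hj with h | h
          · omega
          · exact hlm j h
        · rw [compS_cons, hx0, hTx]
        · rw [compS_cons, hy0, hTe']
  -- adjacency: two points at distance ≤ δ^k lie in two adjacent level-k cells
  have hAdj : ∀ k : ℕ, ∀ s ∈ Icc (0:ℝ) 1, ∀ u ∈ Icc (0:ℝ) 1, s ≤ u → u - s ≤ δ ^ k →
      ∃ w, s ≤ w ∧ w ≤ u ∧ ∃ l1 l2 : List ℕ, l1.length = k ∧ l2.length = k ∧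
        (∀ j ∈ l1, j < m) ∧ (∀ j ∈ l2, j < m) ∧
        (∃ x ∈ Icc (0:ℝ) 1, compS T l1 x = s) ∧ (∃ x ∈ Icc (0:ℝ) 1, compS T l1 x = w) ∧
        (∃ x ∈ Icc (0:ℝ) 1, compS T l2 x = w) ∧ (∃ x ∈ Icc (0:ℝ) 1, compS T l2 x = u) := by
    intro k
    induction k with
    | zero =>
      intro s hs u hu hsu _
      exact ⟨u, hsu, le_refl u, [], [], rfl, rfl, by simp, by simp,
        ⟨s, hs, rfl⟩, ⟨u, hu, rfl⟩, ⟨u, hu, rfl⟩, ⟨u, hu, rfl⟩⟩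
    | succ k ih =>
      intro s hs u hu hsu hd
      obtain ⟨i, hi, his, hsi⟩ := hfind s hs
      by_cases hu1 : u ≤ t (i+1)
      · -- same interval
        obtain ⟨x, hxI, hTx⟩ := hTsurj i hi s his hsi
        obtain ⟨y, hyI, hTy⟩ := hTsurj i hi u (le_trans his hsu) hu1
        have hxyd : |x - y| ≤ δ ^ k := by
          apply hcancel i hi x y (k)
          rw [hTx, hTy, abs_sub_comm, abs_of_nonneg (by linarith : (0:ℝ) ≤ u - s)]
          exact hd
        rcases le_total x y with hxy | hxy
        · have hxyd' : y - x ≤ δ ^ k := by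
            rw [abs_sub_comm, abs_of_nonneg (by linarith : (0:ℝ) ≤ y - x)] at hxyd
            exact hxyd
          obtain ⟨w', hw1, hw2, l1, l2, hlen1, hlen2, hl1m, hl2m, c1, c2, c3, c4⟩ :=
            ih x hxI y hyI hxy hxyd'
          have hw'I : w' ∈ Icc (0:ℝ) 1 := ⟨le_trans hxI.1 hw1, le_trans hw2 hyI.2⟩
          set w := T i w' with hwdef
          have hsw : |s - w| = rT i * (w' - x) := by
            rw [← hTx, hwdef, hTdist i hi, abs_sub_comm,
              abs_of_nonneg (by linarith : (0:ℝ) ≤ w' - x)]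
          have hwu : |w - u| = rT i * (y - w') := by
            rw [← hTy, hwdef, hTdist i hi, abs_sub_comm,
              abs_of_nonneg (by linarith : (0:ℝ) ≤ y - w')]
          have hsum : |s - w| + |w - u| = u - s := by
            have h5 : rT i * (y - x) = u - s := by
              have h := hTdist i hi x y
              rw [hTx, hTy, abs_sub_comm, abs_of_nonneg (by linarith : (0:ℝ) ≤ u - s),
                abs_sub_comm, abs_of_nonneg (by linarith : (0:ℝ) ≤ y - x)] at h
              linarith
            rw [hsw, hwu]; linarith [h5]
          have hswle : s ≤ w ∧ w ≤ u := by
            constructor <;>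
              linarith [le_abs_self (s-w), le_abs_self (w-s), le_abs_self (u-w),
                le_abs_self (w-u), abs_sub_comm s w, abs_sub_comm w u, hsum]
          obtain ⟨x1, hx1I, hx1⟩ := c1
          obtain ⟨x2, hx2I, hx2⟩ := c2
          obtain ⟨x3, hx3I, hx3⟩ := c3
          obtain ⟨x4, hx4I, hx4⟩ := c4
          refine ⟨w, hswle.1, hswle.2, i :: l1, i :: l2, by simp [hlen1], by simp [hlen2],
            ?_, ?_, ⟨x1, hx1I, ?_⟩, ⟨x2, hx2I, ?_⟩, ⟨x3, hx3I, ?_⟩, ⟨x4, hx4I, ?_⟩⟩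
          · intro j hj; rcases List.mem_cons.mp hj with h | h; · omega
            · exact hl1m j h
          · intro j hj; rcases List.mem_cons.mp hj with h | h; · omega
            · exact hl2m j h
          · rw [compS_cons, hx1, hTx]
          · rw [compS_cons, hx2]
          · rw [compS_cons, hx3]
          · rw [compS_cons, hx4, hTy]
        · have hxyd' : x - y ≤ δ ^ k := by
            rw [abs_of_nonneg (by linarith : (0:ℝ) ≤ x - y)] at hxyd
            exact hxyd
          obtain ⟨w', hw1, hw2, l1, l2, hlen1, hlen2, hl1m, hl2m, c1, c2, c3, c4⟩ :=
            ih y hyI x hxI hxy hxyd'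
          have hw'I : w' ∈ Icc (0:ℝ) 1 := ⟨le_trans hyI.1 hw1, le_trans hw2 hxI.2⟩
          set w := T i w' with hwdef
          have hsw : |s - w| = rT i * (x - w') := by
            rw [← hTx, hwdef, hTdist i hi,
              abs_of_nonneg (by linarith : (0:ℝ) ≤ x - w')]
          have hwu : |w - u| = rT i * (w' - y) := by
            rw [← hTy, hwdef, hTdist i hi,
              abs_of_nonneg (by linarith : (0:ℝ) ≤ w' - y)]
          have hsum : |s - w| + |w - u| = u - s := by
            have h5 : rT i * (x - y) = u - s := by
              have h := hTdist i hi x y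
              rw [hTx, hTy, abs_sub_comm, abs_of_nonneg (by linarith : (0:ℝ) ≤ u - s),
                abs_of_nonneg (by linarith : (0:ℝ) ≤ x - y)] at h
              linarith
            rw [hsw, hwu]; linarith [h5]
          have hswle : s ≤ w ∧ w ≤ u := by
            constructor <;>
              linarith [le_abs_self (s-w), le_abs_self (w-s), le_abs_self (u-w),
                le_abs_self (w-u), abs_sub_comm s w, abs_sub_comm w u, hsum]
          obtain ⟨x1, hx1I, hx1⟩ := c1
          obtain ⟨x2, hx2I, hx2⟩ := c2
          obtain ⟨x3, hx3I, hx3⟩ := c3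
          obtain ⟨x4, hx4I, hx4⟩ := c4
          refine ⟨w, hswle.1, hswle.2, i :: l2, i :: l1, by simp [hlen2], by simp [hlen1],
            ?_, ?_, ⟨x4, hx4I, ?_⟩, ⟨x3, hx3I, ?_⟩, ⟨x2, hx2I, ?_⟩, ⟨x1, hx1I, ?_⟩⟩
          · intro j hj; rcases List.mem_cons.mp hj with h | h; · omega
            · exact hl2m j h
          · intro j hj; rcases List.mem_cons.mp hj with h | h; · omega
            · exact hl1m j h
          · rw [compS_cons, hx4, hTx]
          · rw [compS_cons, hx3]
          · rw [compS_cons, hx2]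
          · rw [compS_cons, hx1, hTy]
      · -- split at the vertex t (i+1)
        push_neg at hu1
        have hi1 : i + 1 < m := by
          by_contra hcon
          have heq : i + 1 = m := by omega
          rw [heq, htm] at hu1
          linarith [hu.2]
        have hu2 : u ≤ t ((i+1)+1) := by
          have h3 := hrT (i+1) hi1
          have h2 := hδle (i+1) hi1
          have := hδpow k
          linarith
        obtain ⟨x, hxI, hTx⟩ := hTsurj i hi s his hsi
        have he1 : ∃ e' : ℝ, (e' = 0 ∨ e' = 1) ∧ T i e' = t (i+1) := by
          rcases hend i hi with ⟨_, h1⟩ | ⟨h0, _⟩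
          · exact ⟨1, Or.inr rfl, h1⟩
          · exact ⟨0, Or.inl rfl, h0⟩
        obtain ⟨e', he', hTe'⟩ := he1
        have hxe : |x - e'| ≤ δ ^ k := by
          apply hcancel i hi x e' k
          rw [hTx, hTe', abs_sub_comm, abs_of_nonneg (by linarith : (0:ℝ) ≤ t (i+1) - s)]
          linarith
        obtain ⟨l1, hlen1, hl1m, ⟨x1, hx1I, hx1⟩, ⟨y1, hy1I, hy1⟩⟩ := hEnd k e' he' x hxI hxe
        obtain ⟨x', hx'I, hTx'⟩ := hTsurj (i+1) hi1 u (le_of_lt hu1) hu2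
        have he2 : ∃ e'' : ℝ, (e'' = 0 ∨ e'' = 1) ∧ T (i+1) e'' = t (i+1) := by
          rcases hend (i+1) hi1 with ⟨h0, _⟩ | ⟨_, h1⟩
          · exact ⟨0, Or.inl rfl, h0⟩
          · exact ⟨1, Or.inr rfl, h1⟩
        obtain ⟨e'', he'', hTe''⟩ := he2
        have hxe' : |x' - e''| ≤ δ ^ k := by
          apply hcancel (i+1) hi1 x' e'' k
          rw [hTx', hTe'', abs_of_nonneg (by linarith : (0:ℝ) ≤ u - t (i+1))]
          linarith
        obtain ⟨l2, hlen2, hl2m, ⟨x2, hx2I, hx2⟩, ⟨y2, hy2I, hy2⟩⟩ :=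
          hEnd k e'' he'' x' hx'I hxe'
        refine ⟨t (i+1), hsi, le_of_lt hu1, i :: l1, (i+1) :: l2,
          by simp [hlen1], by simp [hlen2], ?_, ?_,
          ⟨x1, hx1I, ?_⟩, ⟨y1, hy1I, ?_⟩, ⟨y2, hy2I, ?_⟩, ⟨x2, hx2I, ?_⟩⟩
        · intro j hj; rcases List.mem_cons.mp hj with h | h; · omega
          · exact hl1m j h
        · intro j hj; rcases List.mem_cons.mp hj with h | h; · omega
          · exact hl2m j h
        · rw [compS_cons, hx1, hTx]
        · rw [compS_cons, hy1, hTe']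
        · rw [compS_cons, hy2, hTe'']
        · rw [compS_cons, hx2, hTx']
  -- distance bound inside one cell
  have hcell : ∀ (l : List ℕ), (∀ j ∈ l, j < m) → ∀ a b : ℝ,
      (∃ x ∈ Icc (0:ℝ) 1, compS T l x = a) → (∃ y ∈ Icc (0:ℝ) 1, compS T l y = b) →
      dist (g a) (g b) ≤ Mb * ρ ^ l.length := by
    rintro l hl a b ⟨x, hxI, hx⟩ ⟨y, hyI, hy⟩
    rw [← hx, ← hy, ← hcompg l hl x hxI, ← hcompg l hl y hyI, hcompSdist l _ _ hl]
    obtain ⟨h0, h1⟩ := hratioS l hl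
    calc ratioProd r l * dist (g x) (g y) ≤ ρ ^ l.length * Mb := by
          apply mul_le_mul h1 (hMb x hxI y hyI) dist_nonneg (by positivity)
      _ = Mb * ρ ^ l.length := by ring
  -- quantitative uniform continuity
  have hHolderK : ∀ k : ℕ, ∀ s ∈ Icc (0:ℝ) 1, ∀ u ∈ Icc (0:ℝ) 1, |s - u| ≤ δ ^ k →
      dist (g s) (g u) ≤ 2 * Mb * ρ ^ k := by
    have main : ∀ k : ℕ, ∀ s ∈ Icc (0:ℝ) 1, ∀ u ∈ Icc (0:ℝ) 1, s ≤ u → u - s ≤ δ ^ k →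
        dist (g s) (g u) ≤ 2 * Mb * ρ ^ k := by
      intro k s hs u hu hsu hd
      obtain ⟨w, hw1, hw2, l1, l2, hlen1, hlen2, hl1m, hl2m, c1, c2, c3, c4⟩ :=
        hAdj k s hs u hu hsu hd
      have h1 := hcell l1 hl1m s w c1 c2
      have h2 := hcell l2 hl2m w u c3 c4
      rw [hlen1] at h1
      rw [hlen2] at h2
      calc dist (g s) (g u) ≤ dist (g s) (g w) + dist (g w) (g u) := dist_triangle _ _ _
        _ ≤ Mb * ρ ^ k + Mb * ρ ^ k := add_le_add h1 h2
        _ = 2 * Mb * ρ ^ k := by ring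
    intro k s hs u hu hd
    rcases le_total s u with h | h
    · apply main k s hs u hu h
      rw [abs_sub_comm, abs_of_nonneg (by linarith)] at hd
      exact hd
    · rw [dist_comm]
      apply main k u hu s hs h
      rw [abs_of_nonneg (by linarith)] at hd
      exact hd
  -- the Hölder estimate
  have holder : ∃ C > (0:ℝ), ∃ α ∈ Ioc (0:ℝ) 1, ∀ s ∈ Icc (0:ℝ) 1, ∀ u ∈ Icc (0:ℝ) 1,
      dist (g s) (g u) ≤ C * |s - u| ^ α := by
    have hlogδ : Real.log δ < 0 := Real.log_neg hδpos hδlt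
    have hlogρ : Real.log ρ < 0 := Real.log_neg hρpos hρlt
    have hlogle : Real.log δ ≤ Real.log ρ := Real.log_le_log hδpos hδρ
    set α : ℝ := Real.log ρ / Real.log δ with hαdef
    have hαpos : 0 < α := div_pos_of_neg_of_neg hlogρ hlogδ
    have hα1 : α ≤ 1 := by
      rw [hαdef, div_le_one_iff]
      right; right; exact ⟨hlogδ, hlogle⟩
    have hδα : δ ^ α = ρ := by
      rw [Real.rpow_def_of_pos hδpos]
      have hmul : Real.log δ * α = Real.log ρ := by
        rw [hαdef, mul_div_assoc']
        exact mul_div_cancel_left₀ _ (ne_of_lt hlogδ)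
      rw [hmul]
      exact Real.exp_log hρpos
    refine ⟨2 * Mb / ρ, by positivity, α, ⟨hαpos, hα1⟩, ?_⟩
    intro s hs u hu
    by_cases hsu : s = u
    · rw [hsu, sub_self, abs_zero, Real.zero_rpow (ne_of_gt hαpos), mul_zero, dist_self]
    · have h0 : 0 < |s - u| := abs_pos.mpr (sub_ne_zero.mpr hsu)
      have h1 : |s - u| ≤ 1 := by
        rw [abs_le]
        constructor
        · linarith [hs.1, hs.2, hu.1, hu.2]
        · linarith [hs.1, hs.2, hu.1, hu.2]
      have hlogh : Real.log |s - u| ≤ 0 := Real.log_nonpos (le_of_lt h0) h1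
      set β : ℝ := Real.log |s - u| / Real.log δ with hβdef
      have hβ0 : 0 ≤ β := div_nonneg_iff.mpr (Or.inr ⟨hlogh, le_of_lt hlogδ⟩)
      have hβδ : β * Real.log δ = Real.log |s - u| := by
        rw [hβdef]
        exact div_mul_cancel₀ _ (ne_of_lt hlogδ)
      set k : ℕ := ⌊β⌋₊ with hkdef
      have hk1 : (k:ℝ) ≤ β := Nat.floor_le hβ0
      have hk2 : β < k + 1 := Nat.lt_floor_add_one β
      have hhk : |s - u| ≤ δ ^ k := by
        have l1 : Real.log |s - u| ≤ (k:ℝ) * Real.log δ := by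
          nlinarith [mul_nonneg (sub_nonneg.mpr hk1) (neg_nonneg.mpr (le_of_lt hlogδ))]
        calc |s - u| = Real.exp (Real.log |s - u|) := (Real.exp_log h0).symm
          _ ≤ Real.exp ((k:ℝ) * Real.log δ) := Real.exp_le_exp.mpr l1
          _ = δ ^ k := by rw [← Real.log_pow, Real.exp_log (by positivity)]
      have hhk2 : δ ^ (k+1) ≤ |s - u| := by
        have l2 : ((k:ℝ)+1) * Real.log δ ≤ Real.log |s - u| := by
          nlinarith [mul_pos (sub_pos.mpr hk2) (neg_pos.mpr hlogδ)]
        calc δ ^ (k+1) = Real.exp (Real.log (δ ^ (k+1))) := (Real.exp_log (by positivity)).symm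
          _ = Real.exp ((((k:ℕ)+1 : ℕ):ℝ) * Real.log δ) := by rw [Real.log_pow]
          _ ≤ Real.exp (Real.log |s - u|) := by
              apply Real.exp_le_exp.mpr
              push_cast
              exact l2
          _ = |s - u| := Real.exp_log h0
      have key : ρ ^ (k+1) ≤ |s - u| ^ α := by
        have h2 : ((δ:ℝ) ^ (k+1) : ℝ) ^ α ≤ |s - u| ^ α :=
          Real.rpow_le_rpow (by positivity) hhk2 (le_of_lt hαpos)
        calc ρ ^ (k+1) = (δ ^ α) ^ (k+1) := by rw [hδα]
          _ = ((δ:ℝ) ^ (k+1) : ℝ) ^ α := by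
              rw [← Real.rpow_natCast (δ ^ α) (k+1), ← Real.rpow_natCast δ (k+1),
                ← Real.rpow_mul (le_of_lt hδpos), ← Real.rpow_mul (le_of_lt hδpos),
                mul_comm]
          _ ≤ |s - u| ^ α := h2
      calc dist (g s) (g u) ≤ 2 * Mb * ρ ^ k := hHolderK k s hs u hu hhk
        _ = (2 * Mb / ρ) * ρ ^ (k+1) := by
            field_simp
            ring
        _ ≤ (2 * Mb / ρ) * |s - u| ^ α := by
            apply mul_le_mul_of_nonneg_left key (by positivity)
  -- the image of [0,1] is the attractor
  have himage : ∀ K : Set (EuclideanSpace ℝ (Fin n)), IsAttractor m S K → g '' Icc 0 1 = K := by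
    intro K hK
    obtain ⟨hKne, hKcomp, hKeq⟩ := hK
    have hSK : ∀ i < m, ∀ p ∈ K, S i p ∈ K := by
      intro i hi p hp
      rw [hKeq]
      simp only [Set.mem_iUnion]
      exact ⟨i, Finset.mem_range.mpr hi, Set.mem_image_of_mem _ hp⟩
    have hcompSK : ∀ l : List ℕ, (∀ j ∈ l, j < m) → ∀ p ∈ K, compS S l p ∈ K := by
      intro l
      induction l with
      | nil => intro _ p hp; exact hp
      | cons i l ih =>
        intro hl p hp
        rw [compS_cons]
        exact hSK i (hl i (by simp)) _ (ih (fun j hj => hl j (by simp [hj])) p hp)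
    obtain ⟨R, hR⟩ := hKcomp.isBounded.subset_closedBall (g 0)
    obtain ⟨p0, hp0⟩ := hKne
    have hR0 : 0 ≤ R := le_trans dist_nonneg (Metric.mem_closedBall.mp (hR hp0))
    have hD : ∀ x ∈ Icc (0:ℝ) 1, ∀ p ∈ K, dist (g x) p ≤ Mb + R := by
      intro x hx p hp
      calc dist (g x) p ≤ dist (g x) (g 0) + dist (g 0) p := dist_triangle _ _ _
        _ ≤ Mb + R := by
            refine add_le_add (hMb x hx 0 (by norm_num)) ?_
            rw [dist_comm]
            exact Metric.mem_closedBall.mp (hR hp)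
    have hDpos : (0:ℝ) < Mb + R + 1 := by linarith
    -- g '' [0,1] ⊆ K
    have hsub1 : g '' Icc 0 1 ⊆ K := by
      rintro y ⟨s, hsI, rfl⟩
      rw [← hKcomp.isClosed.closure_eq]
      rw [Metric.mem_closure_iff]
      intro ε hε
      obtain ⟨k, hk⟩ := exists_pow_lt_of_lt_one (div_pos hε hDpos) hρlt
      obtain ⟨w, _, _, l1, l2, hlen1, _, hl1m, _, ⟨x, hxI, hx⟩, _, _, _⟩ :=
        hAdj k s hsI s hsI le_rfl (by simp; positivity)
      refine ⟨compS S l1 p0, hcompSK l1 hl1m p0 hp0, ?_⟩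
      have hgs : g s = compS S l1 (g x) := by rw [hcompg l1 hl1m x hxI, hx]
      rw [hgs, hcompSdist l1 _ _ hl1m]
      obtain ⟨hr0, hr1⟩ := hratioS l1 hl1m
      rw [hlen1] at hr1
      calc ratioProd r l1 * dist (g x) p0 ≤ ρ ^ k * (Mb + R + 1) := by
            apply mul_le_mul (le_trans hr1 (le_refl _)) ?_ dist_nonneg (by positivity)
            · linarith [hD x hxI p0 hp0]
        _ < ε := by
            rw [← lt_div_iff₀ hDpos] at *
            exact hk
    -- K ⊆ g '' [0,1]
    have hKdec : ∀ k : ℕ, ∀ x ∈ K, ∃ l : List ℕ, l.length = k ∧ (∀ j ∈ l, j < m) ∧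
        ∃ y ∈ K, compS S l y = x := by
      intro k
      induction k with
      | zero => intro x hx; exact ⟨[], rfl, by simp, x, hx, rfl⟩
      | succ k ih =>
        intro x hx
        obtain ⟨l, hlen, hlm, y, hy, hcy⟩ := ih x hx
        have hy2 := hy
        rw [hKeq] at hy2
        simp only [Set.mem_iUnion] at hy2
        obtain ⟨i, hi, y', hy', hyy⟩ := hy2
        refine ⟨l ++ [i], by simp [hlen], ?_, y', hy', ?_⟩
        · intro j hj
          rcases List.mem_append.mp hj with h | h
          · exact hlm j h
          · have : j = i := by simpa using h
            subst this
            exact Finset.mem_range.mp hi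
        · rw [compS_append]
          have : compS S [i] y' = S i y' := rfl
          rw [this, hyy, hcy]
    have hgIcl : IsClosed (g '' Icc 0 1) :=
      (isCompact_Icc.image_of_continuousOn hgc).isClosed
    have hsub2 : K ⊆ g '' Icc 0 1 := by
      intro x hx
      rw [← hgIcl.closure_eq, Metric.mem_closure_iff]
      intro ε hε
      have hR1 : (0:ℝ) < R + 1 := by linarith
      obtain ⟨k, hk⟩ := exists_pow_lt_of_lt_one (div_pos hε hR1) hρlt
      obtain ⟨l, hlen, hlm, y, hy, hcy⟩ := hKdec k x hx
      have h0I : (0:ℝ) ∈ Icc (0:ℝ) 1 := by norm_num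
      refine ⟨g (compS T l 0), Set.mem_image_of_mem g (hcompTmem l hlm 0 h0I), ?_⟩
      rw [← hcompg l hlm 0 h0I, ← hcy, hcompSdist l _ _ hlm]
      obtain ⟨hr0, hr1⟩ := hratioS l hlm
      rw [hlen] at hr1
      calc ratioProd r l * dist y (g 0) ≤ ρ ^ k * (R + 1) := by
            apply mul_le_mul hr1 ?_ dist_nonneg (by positivity)
            · linarith [Metric.mem_closedBall.mp (hR hy)]
        _ < ε := by
            rw [← lt_div_iff₀ hR1] at *
            exact hk
    exact Set.Subset.antisymm hsub1 hsub2
  exact ⟨holder, himage⟩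
end
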